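/- In the setting of the previous construction with λ₀ ∉ {1,-1,i,-i} and λ₀³ ∉ {1,-1}: the point spectrum of (Φⁿ) equals {1, -1, λ₀, λ̄₀, -λ₀, -λ̄₀}, and this set is not a group under multiplication. -/

import Mathlib

/-- With M abelian, Ψ positive normal unital ergodic with point spectrum
{1,-1} and M_{-1}(Ψ) = ℂu (u unitary), |λ₀| = 1, λ₀ ∉ {1,-1,i,-i}, λ₀³ ∉ {1,-1}:
the point spectrum of Φ([[a,b],[c,d]]) = [[Ψ((a+d)/2), λ₀Ψ(b)],[λ̄₀Ψ(c), Ψ((a+d)/2)]]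
equals {1, -1, λ₀, λ̄₀, -λ₀, -λ̄₀}, and this set is not a group (not closed under
multiplication). -/
theorem matrix_phi_spectrum_not_group
    {M : Type*} [NormedCommRing M] [StarRing M] [CStarRing M] [NormedAlgebra ℂ M]
    [StarModule ℂ M] [CompleteSpace M] [PartialOrder M] [StarOrderedRing M]
    (Ψ : M →ₗ[ℂ] M) (hΨunital : Ψ 1 = 1) (hΨpos : ∀ a : M, 0 ≤ a → 0 ≤ Ψ a)
    (hΨerg : ∀ a : M, Ψ a = a → ∃ θ : ℂ, a = θ • (1 : M))
    (hspec : {μ : ℂ | ‖μ‖ = 1 ∧ ∃ a : M, a ≠ 0 ∧ Ψ a = μ • a} = {1, -1})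
    (u : M) (huni : star u * u = 1 ∧ u * star u = 1) (hu : Ψ u = -u)
    (hM1 : ∀ a : M, Ψ a = -a → ∃ α : ℂ, a = α • u)
    (l : ℂ) (hl : ‖l‖ = 1)
    (h1 : l ≠ 1) (h2 : l ≠ -1) (h3 : l ≠ Complex.I) (h4 : l ≠ -Complex.I)
    (h5 : l ^ 3 ≠ 1) (h6 : l ^ 3 ≠ -1) :
    {lam : ℂ | ‖lam‖ = 1 ∧ ∃ x : Matrix (Fin 2) (Fin 2) M, x ≠ 0 ∧
        !![Ψ ((2⁻¹ : ℂ) • (x 0 0 + x 1 1)), l • Ψ (x 0 1);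
           (starRingEnd ℂ) l • Ψ (x 1 0), Ψ ((2⁻¹ : ℂ) • (x 0 0 + x 1 1))] = lam • x} =
      {1, -1, l, starRingEnd ℂ l, -l, -(starRingEnd ℂ l)} ∧
    ¬ (∀ a ∈ ({1, -1, l, starRingEnd ℂ l, -l, -(starRingEnd ℂ l)} : Set ℂ),
       ∀ b ∈ ({1, -1, l, starRingEnd ℂ l, -l, -(starRingEnd ℂ l)} : Set ℂ),
         a * b ∈ ({1, -1, l, starRingEnd ℂ l, -l, -(starRingEnd ℂ l)} : Set ℂ)) := by
  have hll : l * (starRingEnd ℂ) l = 1 := by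
    rw [Complex.mul_conj, Complex.normSq_eq_norm_sq, hl]; norm_num
  have hll' : (starRingEnd ℂ) l * l = 1 := by rw [mul_comm]; exact hll
  have hcl : ‖(starRingEnd ℂ) l‖ = 1 := by rw [RCLike.norm_conj]; exact hl
  have hone : (1:M) ≠ 0 := by
    have h1m : (1:ℂ) ∈ ({1,-1}:Set ℂ) := by simp
    rw [← hspec] at h1m
    obtain ⟨-, a, ha, -⟩ := h1m
    intro h
    have : Subsingleton M := subsingleton_of_zero_eq_one h.symm
    exact ha (Subsingleton.elim a 0)
  have hu0 : u ≠ 0 := by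
    intro h; apply hone; rw [← huni.1, h, mul_zero]
  have key : ∀ (μ : ℂ) (a : M), ‖μ‖ = 1 → a ≠ 0 → Ψ a = μ • a → μ = 1 ∨ μ = -1 := by
    intro μ a ha hb hc
    have : μ ∈ ({1,-1} : Set ℂ) := hspec ▸ ⟨ha, a, hb, hc⟩
    simpa using this
  have h1eq : (2⁻¹:ℂ) • ((1:M)+1) = 1 := by
    rw [← two_smul ℂ (1:M), smul_smul]; norm_num
  have hueq : (2⁻¹:ℂ) • (u+u) = u := by
    rw [← two_smul ℂ u, smul_smul]; norm_num
  constructor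
  · ext lam
    simp only [Set.mem_setOf_eq, Set.mem_insert_iff, Set.mem_singleton_iff]
    constructor
    · rintro ⟨hlam, x, hx, heq⟩
      have hlam0 : lam ≠ 0 := by intro h; rw [h] at hlam; simp at hlam
      have h00 := congrFun (congrFun heq 0) 0
      have h01 := congrFun (congrFun heq 0) 1
      have h10 := congrFun (congrFun heq 1) 0
      have h11 := congrFun (congrFun heq 1) 1
      simp only [Matrix.cons_val', Matrix.cons_val_zero, Matrix.empty_val',
        Matrix.cons_val_fin_one, Matrix.cons_val_one, Matrix.head_cons,
        Matrix.head_fin_const, Matrix.smul_apply, Matrix.of_apply] at h00 h01 h10 h11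
      have had : x 1 1 = x 0 0 := by
        have h := h11.symm.trans h00
        exact smul_right_injective M hlam0 h
      have hhalf : (2⁻¹:ℂ) • (x 0 0 + x 1 1) = x 0 0 := by
        rw [had, ← two_smul ℂ (x 0 0), smul_smul]; norm_num
      have hΨa : Ψ (x 0 0) = lam • x 0 0 := by rw [hhalf] at h00; exact h00
      have hΨb : Ψ (x 0 1) = ((starRingEnd ℂ) l * lam) • x 0 1 := by
        have h := congrArg (fun y => (starRingEnd ℂ) l • y) h01
        simpa [smul_smul, hll'] using h
      have hΨc : Ψ (x 1 0) = (l * lam) • x 1 0 := by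
        have h := congrArg (fun y => l • y) h10
        simpa [smul_smul, hll] using h
      by_cases ha : x 0 0 = 0
      · by_cases hb : x 0 1 = 0
        · by_cases hc : x 1 0 = 0
          · exfalso
            apply hx
            ext i j
            fin_cases i <;> fin_cases j <;>
              simp only [Matrix.zero_apply] <;>
              first
                | exact ha
                | exact hb
                | exact hc
                | exact had.trans ha
          · have hnorm : ‖l * lam‖ = 1 := by rw [norm_mul, hl, hlam]; norm_num
            rcases key _ _ hnorm hc hΨc with h|h
            · right; right; right; left
              calc lam = ((starRingEnd ℂ) l * l) * lam := by rw [hll']; ring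
                _ = (starRingEnd ℂ) l * (l * lam) := by ring
                _ = (starRingEnd ℂ) l := by rw [h, mul_one]
            · right; right; right; right; right
              calc lam = ((starRingEnd ℂ) l * l) * lam := by rw [hll']; ring
                _ = (starRingEnd ℂ) l * (l * lam) := by ring
                _ = -(starRingEnd ℂ) l := by rw [h]; ring
        · have hnorm : ‖(starRingEnd ℂ) l * lam‖ = 1 := by rw [norm_mul, hcl, hlam]; norm_num
          rcases key _ _ hnorm hb hΨb with h|h
          · right; right; left
            calc lam = (l * (starRingEnd ℂ) l) * lam := by rw [hll]; ring
              _ = l * ((starRingEnd ℂ) l * lam) := by ring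
              _ = l := by rw [h, mul_one]
          · right; right; right; right; left
            calc lam = (l * (starRingEnd ℂ) l) * lam := by rw [hll]; ring
              _ = l * ((starRingEnd ℂ) l * lam) := by ring
              _ = -l := by rw [h]; ring
      · rcases key lam _ hlam ha hΨa with h|h
        · left; exact h
        · right; left; exact h
    · have hΨ0 : Ψ 0 = 0 := map_zero Ψ
      rintro (h|h|h|h|h|h) <;> subst h
      · refine ⟨by norm_num, !![1,0;0,1], ?_, ?_⟩
        · intro h
          apply hone
          have := congrFun (congrFun h 0) 0
          simpa using this
        · ext i j
          fin_cases i <;> fin_cases j <;>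
            simp [h1eq, hΨunital, hΨ0]
      · refine ⟨by norm_num, !![u,0;0,u], ?_, ?_⟩
        · intro h
          apply hu0
          have := congrFun (congrFun h 0) 0
          simpa using this
        · ext i j
          fin_cases i <;> fin_cases j <;>
            simp [hueq, hu, hΨ0]
      · refine ⟨hl, !![0,1;0,0], ?_, ?_⟩
        · intro h
          apply hone
          have := congrFun (congrFun h 0) 1
          simpa using this
        · ext i j
          fin_cases i <;> fin_cases j <;>
            simp [hΨunital, hΨ0, show (2⁻¹:ℂ) • ((0:M)+0) = 0 by simp]
      · refine ⟨hcl, !![0,0;1,0], ?_, ?_⟩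
        · intro h
          apply hone
          have := congrFun (congrFun h 1) 0
          simpa using this
        · ext i j
          fin_cases i <;> fin_cases j <;>
            simp [hΨunital, hΨ0, show (2⁻¹:ℂ) • ((0:M)+0) = 0 by simp]
      · refine ⟨by rw [norm_neg]; exact hl, !![0,u;0,0], ?_, ?_⟩
        · intro h
          apply hu0
          have := congrFun (congrFun h 0) 1
          simpa using this
        · ext i j
          fin_cases i <;> fin_cases j <;>
            simp [hu, hΨ0, show (2⁻¹:ℂ) • ((0:M)+0) = 0 by simp]
      · refine ⟨by rw [norm_neg]; exact hcl, !![0,0;u,0], ?_, ?_⟩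
        · intro h
          apply hu0
          have := congrFun (congrFun h 1) 0
          simpa using this
        · ext i j
          fin_cases i <;> fin_cases j <;>
            simp [hu, hΨ0, show (2⁻¹:ℂ) • ((0:M)+0) = 0 by simp]
  · intro h
    have hl0 : l ≠ 0 := by intro h0; rw [h0] at hl; simp at hl
    have hmem : l ∈ ({1, -1, l, starRingEnd ℂ l, -l, -(starRingEnd ℂ l)} : Set ℂ) := by
      simp
    have := h l hmem l hmem
    simp only [Set.mem_insert_iff, Set.mem_singleton_iff] at this
    rcases this with h'|h'|h'|h'|h'|h'
    · rcases mul_self_eq_one_iff.mp h' with h''|h'' <;> [exact h1 h''; exact h2 h'']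
    · have hfac : (l - Complex.I) * (l + Complex.I) = 0 := by
        linear_combination h' - Complex.I_sq
      rcases mul_eq_zero.mp hfac with h''|h''
      · exact h3 (sub_eq_zero.mp h'')
      · exact h4 (eq_neg_of_add_eq_zero_left h'')
    · exact h1 (mul_left_cancel₀ hl0 (by rw [h', mul_one]))
    · apply h5
      calc l^3 = l * (l * l) := by ring
        _ = l * (starRingEnd ℂ) l := by rw [h']
        _ = 1 := hll
    · exact h2 (mul_left_cancel₀ hl0 (by rw [h']; ring))
    · apply h6
      calc l^3 = l * (l * l) := by ring
        _ = l * (-(starRingEnd ℂ) l) := by rw [h']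
        _ = -1 := by rw [mul_neg, hll]
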